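/- (McDiarmid's bounded differences inequality) Let X_1,...,X_n be independent random variables with values in a set A, and let f : A^n → ℝ satisfy |f(t) - f(t')| ≤ ε_k whenever t, t' differ only in the k-th coordinate. Then for every l > 0: P(|f(X_1,...,X_n) - E[f(X_1,...,X_n)]| ≥ l) ≤ 2 exp(-2l² / ∑_k ε_k²). -/

import Mathlib

set_option maxHeartbeats 1600000

open Real MeasureTheory ProbabilityTheory

lemma hoeff_D_pos (p : ℝ) (hp0 : 0 ≤ p) (hp1 : p ≤ 1) (u : ℝ) :
    0 < 1 - p + p * Real.exp u := by
  rcases eq_or_lt_of_le hp1 with h | h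
  · subst h; simpa using Real.exp_pos u
  · have : 0 ≤ p * Real.exp u := mul_nonneg hp0 (Real.exp_pos u).le
    linarith

lemma hoeff_key (p : ℝ) (hp0 : 0 ≤ p) (hp1 : p ≤ 1) (u : ℝ) :
    -p * u + Real.log (1 - p + p * Real.exp u) ≤ u ^ 2 / 8 := by
  set φ : ℝ → ℝ := fun u => -p * u + Real.log (1 - p + p * Real.exp u) with hφ
  set φ' : ℝ → ℝ := fun u => -p + p * Real.exp u / (1 - p + p * Real.exp u) with hφ'
  have hD : ∀ u : ℝ, 0 < 1 - p + p * Real.exp u := hoeff_D_pos p hp0 hp1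
  have hd1 : ∀ u : ℝ, HasDerivAt φ (φ' u) u := by
    intro u
    have h1 : HasDerivAt (fun u : ℝ => 1 - p + p * Real.exp u) (p * Real.exp u) u := by
      simpa using ((Real.hasDerivAt_exp u).const_mul p).const_add (1 - p)
    have h2 := h1.log (hD u).ne'
    simpa [φ, φ', Pi.add_def] using ((hasDerivAt_id u).const_mul (-p)).add h2
  have hd2 : ∀ u : ℝ, HasDerivAt φ'
      (p * Real.exp u * (1 - p) / (1 - p + p * Real.exp u) ^ 2) u := by
    intro u
    have h1 : HasDerivAt (fun u : ℝ => 1 - p + p * Real.exp u) (p * Real.exp u) u := by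
      simpa using ((Real.hasDerivAt_exp u).const_mul p).const_add (1 - p)
    have h2 : HasDerivAt (fun u : ℝ => p * Real.exp u) (p * Real.exp u) u :=
      (Real.hasDerivAt_exp u).const_mul p
    have h3 := h2.div h1 (hD u).ne'
    have : (p * Real.exp u * (1 - p + p * Real.exp u) - p * Real.exp u * (p * Real.exp u)) /
        (1 - p + p * Real.exp u) ^ 2 = p * Real.exp u * (1 - p) / (1 - p + p * Real.exp u) ^ 2 := by
      ring
    rw [this] at h3
    simpa [φ', Pi.add_def, Pi.div_def] using (hasDerivAt_const u (-p)).add h3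
  have hd2bd : ∀ u : ℝ, p * Real.exp u * (1 - p) / (1 - p + p * Real.exp u) ^ 2 ≤ 1 / 4 := by
    intro u
    rw [div_le_iff₀ (pow_pos (hD u) 2)]
    nlinarith [sq_nonneg (1 - p - p * Real.exp u), (Real.exp_pos u).le]
  -- ψ = u^2/8 - φ
  set ψ : ℝ → ℝ := fun u => u ^ 2 / 8 - φ u with hψ
  set ψ' : ℝ → ℝ := fun u => u / 4 - φ' u with hψ'
  have hdψ : ∀ u : ℝ, HasDerivAt ψ (ψ' u) u := by
    intro u
    have : HasDerivAt (fun u : ℝ => u ^ 2 / 8) (u / 4) u := by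
      have := (hasDerivAt_pow 2 u).div_const 8
      simpa [Nat.cast_ofNat] using this.congr_deriv (by ring)
    exact this.sub (hd1 u)
  have hdψ' : ∀ u : ℝ, HasDerivAt ψ' (1 / 4 - p * Real.exp u * (1 - p) / (1 - p + p * Real.exp u) ^ 2) u := by
    intro u
    exact ((hasDerivAt_id u).div_const 4).sub (hd2 u)
  have hψ'mono : Monotone ψ' := by
    have : ∀ u : ℝ, 0 ≤ 1 / 4 - p * Real.exp u * (1 - p) / (1 - p + p * Real.exp u) ^ 2 := by
      intro u; linarith [hd2bd u]
    exact monotone_of_deriv_nonneg (fun u => (hdψ' u).differentiableAt) (by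
      intro u; rw [(hdψ' u).deriv]; exact this u)
  have hψ'0 : ψ' 0 = 0 := by
    simp [ψ', φ']
  have hψ0 : ψ 0 = 0 := by
    simp [ψ, φ]
  have hψdiff : Differentiable ℝ ψ := fun u => (hdψ u).differentiableAt
  have key : 0 ≤ ψ u := by
    rcases le_total 0 u with h | h
    · have : MonotoneOn ψ (Set.Ici 0) := by
        apply monotoneOn_of_deriv_nonneg (convex_Ici 0)
          (Continuous.continuousOn hψdiff.continuous)
          (fun x _ => ((hdψ x).differentiableAt).differentiableWithinAt)
        intro x hx
        rw [(hdψ x).deriv]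
        have := hψ'mono (le_of_lt (by simpa using hx) : (0:ℝ) ≤ x)
        · linarith [hψ'0]
      have := this (Set.self_mem_Ici) (Set.mem_Ici.mpr h) h
      linarith [hψ0]
    · have : AntitoneOn ψ (Set.Iic 0) := by
        apply antitoneOn_of_deriv_nonpos (convex_Iic 0)
          (Continuous.continuousOn hψdiff.continuous)
          (fun x _ => ((hdψ x).differentiableAt).differentiableWithinAt)
        intro x hx
        rw [(hdψ x).deriv]
        have := hψ'mono (le_of_lt (by simpa using hx) : x ≤ (0:ℝ))
        linarith [hψ'0]
      have := this (Set.mem_Iic.mpr h) (Set.self_mem_Iic) h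
      linarith [hψ0]
  have : φ u ≤ u ^ 2 / 8 := by simpa [ψ, sub_nonneg] using key
  simpa [φ] using this

lemma integrable_of_bdd {α : Type*} [MeasurableSpace α] (ν : Measure α) [IsFiniteMeasure ν]
    {h : α → ℝ} (hm : AEStronglyMeasurable h ν) (C : ℝ) (hb : ∀ x, |h x| ≤ C) :
    Integrable h ν :=
  Integrable.mono' (integrable_const C) hm (ae_of_all _ (by simpa using hb))

lemma hoeffding_lemma {α : Type*} [MeasurableSpace α] (ν : Measure α) [IsProbabilityMeasure ν]
    (h : α → ℝ) (hm : Measurable h) (a b : ℝ) (hab : ∀ x, h x ∈ Set.Icc a b)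
    (hmean : ∫ x, h x ∂ν = 0) (s : ℝ) :
    ∫ x, Real.exp (s * h x) ∂ν ≤ Real.exp (s ^ 2 * (b - a) ^ 2 / 8) := by
  have hne : Nonempty α := by
    rcases isEmpty_or_nonempty α with hE | hN
    · exfalso
      have : ν Set.univ = 1 := measure_univ
      rw [Set.univ_eq_empty_iff.mpr hE] at this
      simp at this
    · exact hN
  obtain ⟨x₀⟩ := hne
  have hax : a ≤ b := le_trans (hab x₀).1 (hab x₀).2
  have hint : Integrable h ν :=
    integrable_of_bdd ν hm.aestronglyMeasurable (max |a| |b|) (fun x => by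
      rcases hab x with ⟨h1, h2⟩
      rw [abs_le]
      constructor
      · exact le_trans (neg_le_neg (le_max_left |a| |b|)) (by
          have := neg_abs_le a; linarith)
      · exact le_trans h2 (le_trans (le_abs_self b) (le_max_right _ _)))
  have ha0 : a ≤ 0 := by
    have : a ≤ ∫ x, h x ∂ν := by
      rw [show a = ∫ _, a ∂ν by simp [integral_const]]
      exact integral_mono (integrable_const a) hint (fun x => (hab x).1)
    linarith [hmean ▸ this]
  have hb0 : 0 ≤ b := by
    have : (∫ x, h x ∂ν) ≤ b := by
      rw [show b = ∫ _ : α, b ∂ν by simp [integral_const]]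
      exact integral_mono hint (integrable_const b) (fun x => (hab x).2)
    linarith [hmean ▸ this]
  have hintexp : Integrable (fun x => Real.exp (s * h x)) ν := by
    apply integrable_of_bdd ν ((hm.const_mul s).exp).aestronglyMeasurable
      (Real.exp (max (s * a) (s * b)))
    intro x
    rw [abs_of_pos (Real.exp_pos _)]
    apply Real.exp_le_exp.mpr
    rcases le_total 0 s with hs | hs
    · exact le_trans (mul_le_mul_of_nonneg_left (hab x).2 hs) (le_max_right _ _)
    · exact le_trans (mul_le_mul_of_nonpos_left (hab x).1 hs) (le_max_left _ _)
  rcases eq_or_lt_of_le hax with heq | hlt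
  · -- a = b, so h x = a = 0
    subst heq
    have ha : a = 0 := le_antisymm ha0 hb0
    subst ha
    have : ∀ x, h x = 0 := fun x => le_antisymm (hab x).2 (hab x).1
    simp [this, Real.exp_nonneg, Real.one_le_exp_iff]
  · -- a < b
    set C1 := Real.exp (s * a)
    set C2 := Real.exp (s * b)
    -- pointwise convexity bound
    have hconv : ∀ x, Real.exp (s * h x) ≤
        (b * C1 - a * C2) / (b - a) + h x * ((C2 - C1) / (b - a)) := by
      intro x
      rcases hab x with ⟨h1, h2⟩
      have hba : (0:ℝ) < b - a := by linarith
      have θnn : 0 ≤ (b - h x) / (b - a) := div_nonneg (by linarith) hba.le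
      have θ'nn : 0 ≤ (h x - a) / (b - a) := div_nonneg (by linarith) hba.le
      have θsum : (b - h x) / (b - a) + (h x - a) / (b - a) = 1 := by
        field_simp
        ring
      have := convexOn_exp.2 (Set.mem_univ (s * a)) (Set.mem_univ (s * b)) θnn θ'nn θsum
      have harg : ((b - h x) / (b - a)) • (s * a) + ((h x - a) / (b - a)) • (s * b) = s * h x := by
        simp only [smul_eq_mul]
        field_simp
        ring
      rw [harg] at this
      refine le_trans this (le_of_eq ?_)
      simp only [smul_eq_mul, C1, C2]
      field_simp
      ring
    have hRHSint : Integrable (fun x => (b * C1 - a * C2) / (b - a) + h x * ((C2 - C1) / (b - a))) ν :=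
      (integrable_const _).add (hint.mul_const _)
    have step1 : ∫ x, Real.exp (s * h x) ∂ν ≤ (b * C1 - a * C2) / (b - a) := by
      calc ∫ x, Real.exp (s * h x) ∂ν
          ≤ ∫ x, ((b * C1 - a * C2) / (b - a) + h x * ((C2 - C1) / (b - a))) ∂ν :=
            integral_mono hintexp hRHSint hconv
        _ = (b * C1 - a * C2) / (b - a) := by
            rw [integral_add (integrable_const _) (hint.mul_const _), integral_const,
              integral_mul_const, hmean]
            simp
    -- now the analytic bound
    set p : ℝ := -a / (b - a) with hp
    set u : ℝ := s * (b - a) with hu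
    have hba : (0:ℝ) < b - a := by linarith
    have hp0 : 0 ≤ p := div_nonneg (by linarith) hba.le
    have hp1 : p ≤ 1 := by
      rw [div_le_one hba]; linarith
    have hDpos : 0 < 1 - p + p * Real.exp u := by
      rcases eq_or_lt_of_le hp1 with h' | h'
      · rw [h']; simpa using Real.exp_pos u
      · have : 0 ≤ p * Real.exp u := mul_nonneg hp0 (Real.exp_pos u).le
        linarith
    have hfact : (b * C1 - a * C2) / (b - a) =
        Real.exp (-p * u) * (1 - p + p * Real.exp u) := by
      have e1 : Real.exp (-p * u) = C1 := by
        simp only [C1, hp, hu]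
        congr 1
        field_simp
      have e2 : Real.exp (-p * u) * Real.exp u = C2 := by
        rw [← Real.exp_add]
        simp only [C2, hp, hu]
        congr 1
        field_simp
        ring
      rw [show Real.exp (-p*u) * (1 - p + p * Real.exp u)
          = Real.exp (-p*u) * (1-p) + (Real.exp (-p*u) * Real.exp u) * p by ring, e2, e1, hp]
      field_simp
      ring
    have key := hoeff_key p hp0 hp1 u
    have hlog : Real.exp (-p * u) * (1 - p + p * Real.exp u) ≤ Real.exp (u ^ 2 / 8) := by
      rw [← Real.exp_log hDpos, ← Real.exp_add]
      exact Real.exp_le_exp.mpr key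
    calc ∫ x, Real.exp (s * h x) ∂ν ≤ (b * C1 - a * C2) / (b - a) := step1
      _ = Real.exp (-p * u) * (1 - p + p * Real.exp u) := hfact
      _ ≤ Real.exp (u ^ 2 / 8) := hlog
      _ = Real.exp (s ^ 2 * (b - a) ^ 2 / 8) := by rw [hu]; ring_nf

lemma bdd_diff_total {n : ℕ} {A : Type*} (f : (Fin n → A) → ℝ) (ε : Fin n → ℝ)
    (hbd : ∀ (t t' : Fin n → A) (k : Fin n),
      (∀ j, j ≠ k → t j = t' j) → |f t - f t'| ≤ ε k)
    (t t' : Fin n → A) : |f t - f t'| ≤ ∑ k, ε k := by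
  have main : ∀ (d : Finset (Fin n)) (t t' : Fin n → A),
      (∀ j ∉ d, t j = t' j) → |f t - f t'| ≤ ∑ k ∈ d, ε k := by
    intro d
    induction d using Finset.induction_on with
    | empty =>
      intro t t' hagree
      have : t = t' := funext fun j => hagree j (Finset.notMem_empty j)
      simp [this]
    | insert k d' hk ih =>
      intro t t' hagree
      set t'' : Fin n → A := Function.update t k (t' k) with ht''
      have h1 : |f t - f t''| ≤ ε k := by
        apply hbd
        intro j hj
        rw [ht'', Function.update_of_ne hj]
      have h2 : |f t'' - f t'| ≤ ∑ j ∈ d', ε j := by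
        apply ih
        intro j hj
        by_cases hjk : j = k
        · subst hjk; rw [ht'', Function.update_self]
        · rw [ht'', Function.update_of_ne hjk]
          exact hagree j (by simp [hjk, hj])
      calc |f t - f t'| ≤ |f t - f t''| + |f t'' - f t'| := abs_sub_le _ _ _
        _ ≤ ε k + ∑ j ∈ d', ε j := add_le_add h1 h2
        _ = ∑ j ∈ insert k d', ε j := (Finset.sum_insert hk).symm
  have := main Finset.univ t t' (fun j hj => absurd (Finset.mem_univ j) hj)
  simpa using this

lemma abs_int_le {α : Type*} [MeasurableSpace α] (ν : Measure α) (h : α → ℝ) :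
    |∫ x, h x ∂ν| ≤ ∫ x, |h x| ∂ν := by
  simpa [Real.norm_eq_abs] using norm_integral_le_integral_norm (μ := ν) h

lemma mcdiarmid_mgf {A : Type*} [MeasurableSpace A] :
    ∀ (n : ℕ) (ν : Fin n → Measure A), (∀ i, IsProbabilityMeasure (ν i)) →
    ∀ (f : (Fin n → A) → ℝ), Measurable f →
    ∀ (ε : Fin n → ℝ), (∀ k, 0 ≤ ε k) →
    (∀ (t t' : Fin n → A) (k : Fin n),
      (∀ j, j ≠ k → t j = t' j) → |f t - f t'| ≤ ε k) →
    ∀ s : ℝ,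
    ∫ y, Real.exp (s * f y) ∂(Measure.pi ν)
      ≤ Real.exp (s * ∫ y, f y ∂(Measure.pi ν) + s ^ 2 * (∑ k, ε k ^ 2) / 8) := by
  intro n
  induction n with
  | zero =>
    intro ν hν f hf ε hε hbd s
    have : IsProbabilityMeasure (Measure.pi ν) := by
      haveI := hν; infer_instance
    have hcon : ∀ y : Fin 0 → A, f y = f (fun i => i.elim0) := by
      intro y; congr 1; funext i; exact i.elim0
    rw [show (fun y => Real.exp (s * f y)) = fun _ => Real.exp (s * f (fun i => i.elim0)) by
      funext y; rw [hcon y]]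
    rw [show (fun y => f y) = fun _ => f (fun i => i.elim0) by funext y; rw [hcon y]]
    rw [integral_const, integral_const]
    simp
  | succ n ih =>
    intro ν hν f hf ε hε hbd s
    haveI := hν
    haveI : IsProbabilityMeasure (Measure.pi ν) := by infer_instance
    -- A is nonempty
    have hA : Nonempty A := by
      rcases isEmpty_or_nonempty A with hE | hN
      · exfalso
        have h1 : (ν 0) Set.univ = 1 := measure_univ
        rw [Set.univ_eq_empty_iff.mpr hE] at h1
        simp at h1
      · exact hN
    obtain ⟨a₀⟩ := hA
    -- boundedness of f
    set t₀ : Fin (n+1) → A := fun _ => a₀ with ht₀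
    have hfbd : ∀ t, |f t| ≤ |f t₀| + ∑ k, ε k := by
      intro t
      have := bdd_diff_total f ε hbd t t₀
      calc |f t| = |f t - f t₀ + f t₀| := by ring_nf
        _ ≤ |f t - f t₀| + |f t₀| := abs_add_le _ _
        _ ≤ ∑ k, ε k + |f t₀| := by linarith
        _ = |f t₀| + ∑ k, ε k := by ring
    set B : ℝ := |f t₀| + ∑ k, ε k with hB
    -- the equivalence with the product
    set ν' : Fin n → Measure A := fun j => ν ((0 : Fin (n+1)).succAbove j) with hν'
    haveI : ∀ j, IsProbabilityMeasure (ν' j) := fun j => hν _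
    haveI : IsProbabilityMeasure (Measure.pi ν') := by infer_instance
    have mp := measurePreserving_piFinSuccAbove ν (0 : Fin (n+1))
    set e := MeasurableEquiv.piFinSuccAbove (fun _ : Fin (n+1) => A) 0 with he
    -- insertion map
    set ins : A → (Fin n → A) → (Fin (n+1) → A) := fun a z => Fin.insertNth 0 a z with hins
    have hesymm : ∀ p : A × (Fin n → A), e.symm p = ins p.1 p.2 := fun p => rfl
    have hins_meas : Measurable (fun p : A × (Fin n → A) => ins p.1 p.2) := by
      have : Measurable e.symm := e.symm.measurable
      exact this
    haveI : IsProbabilityMeasure ((ν 0).prod (Measure.pi ν')) := by infer_instance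
    have insa_meas : ∀ z, Measurable (fun a => ins a z) := fun z =>
      hins_meas.comp (measurable_id.prodMk measurable_const)
    -- key coordinate facts
    have ins_same : ∀ (a : A) (z : Fin n → A), ins a z 0 = a := by
      intro a z; simp [hins]
    have ins_succ : ∀ (a : A) (z : Fin n → A) (m : Fin n), ins a z m.succ = z m := by
      intro a z m
      rw [hins, ← Fin.zero_succAbove m]
      exact Fin.insertNth_apply_succAbove (α := fun _ : Fin (n+1) => A) 0 a z m
    -- diff at coordinate 0
    have hd0 : ∀ (z : Fin n → A) (a a' : A), |f (ins a z) - f (ins a' z)| ≤ ε 0 := by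
      intro z a a'
      apply hbd _ _ 0
      intro i hi
      rcases Fin.eq_zero_or_eq_succ i with h | ⟨m, rfl⟩
      · exact absurd h hi
      · rw [ins_succ, ins_succ]
    -- g
    set g : (Fin n → A) → ℝ := fun z => ∫ a, f (ins a z) ∂(ν 0) with hg
    have hFsm : StronglyMeasurable (fun p : A × (Fin n → A) => f (ins p.1 p.2)) :=
      (hf.comp hins_meas).stronglyMeasurable
    have hgsm : StronglyMeasurable g := hFsm.integral_prod_left'
    clear_value g
    have hint_insa : ∀ z, Integrable (fun a => f (ins a z)) (ν 0) := fun z =>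
      integrable_of_bdd _ ((hf.comp (insa_meas z)).aestronglyMeasurable) B (fun a => hfbd _)
    have hgbd : ∀ z, |g z| ≤ B := by
      intro z
      calc |g z| = |∫ a, f (ins a z) ∂(ν 0)| := by rw [hg]
        _ ≤ ∫ a, |f (ins a z)| ∂(ν 0) := abs_int_le _ _
        _ ≤ ∫ _, B ∂(ν 0) := integral_mono (hint_insa z).abs (integrable_const B)
            (fun a => hfbd _)
        _ = B := by simp
    -- bounded differences for g
    have hbd_g : ∀ (z z' : Fin n → A) (j : Fin n),
        (∀ i, i ≠ j → z i = z' i) → |g z - g z'| ≤ ε j.succ := by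
      intro z z' j hzz
      have hdiff : ∀ a : A, |f (ins a z) - f (ins a z')| ≤ ε j.succ := by
        intro a
        apply hbd _ _ j.succ
        intro i hi
        rcases Fin.eq_zero_or_eq_succ i with h | ⟨m, rfl⟩
        · subst h; rw [ins_same, ins_same]
        · rw [ins_succ, ins_succ]
          apply hzz
          intro hmj; apply hi; rw [hmj]
      rw [hg]
      rw [← integral_sub (hint_insa z) (hint_insa z')]
      calc |∫ a, (f (ins a z) - f (ins a z')) ∂(ν 0)|
          ≤ ∫ a, |f (ins a z) - f (ins a z')| ∂(ν 0) := abs_int_le _ _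
        _ ≤ ∫ _, ε j.succ ∂(ν 0) := integral_mono
            (((hint_insa z).sub (hint_insa z')).abs) (integrable_const _) hdiff
        _ = ε j.succ := by simp
    -- Hoeffding per z
    have hoeff : ∀ z : Fin n → A,
        ∫ a, Real.exp (s * f (ins a z)) ∂(ν 0)
          ≤ Real.exp (s * g z) * Real.exp (s ^ 2 * ε 0 ^ 2 / 8) := by
      intro z
      set c : ℝ := sInf (Set.range (fun a => f (ins a z))) with hc
      have hbdd : BddBelow (Set.range (fun a => f (ins a z))) := by
        refine ⟨f (ins a₀ z) - ε 0, ?_⟩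
        rintro x ⟨a, rfl⟩
        have := hd0 z a₀ a
        have := abs_le.mp this
        linarith [this.2]
      have hcle : ∀ a, c ≤ f (ins a z) := fun a => csInf_le hbdd ⟨a, rfl⟩
      have hlec : ∀ a, f (ins a z) ≤ c + ε 0 := by
        intro a
        have : f (ins a z) - ε 0 ≤ c := by
          have hne : (Set.range (fun a => f (ins a z))).Nonempty := ⟨f (ins a₀ z), ⟨a₀, rfl⟩⟩
          apply le_csInf hne
          rintro x ⟨a', rfl⟩
          have := abs_le.mp (hd0 z a a')
          linarith [this.1]
        linarith
      have hmean : ∫ a, (f (ins a z) - g z) ∂(ν 0) = 0 := by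
        rw [integral_sub (hint_insa z) (integrable_const _), integral_const]
        simp [hg]
      have hh := hoeffding_lemma (ν 0) (fun a => f (ins a z) - g z)
        ((hf.comp (insa_meas z)).sub_const _) (c - g z) (c - g z + ε 0)
        (fun a => Set.mem_Icc.mpr ⟨by linarith [hcle a], by linarith [hlec a]⟩) hmean s
      have heq : ∀ a, Real.exp (s * f (ins a z))
          = Real.exp (s * g z) * Real.exp (s * (f (ins a z) - g z)) := by
        intro a; rw [← Real.exp_add]; ring_nf
      calc ∫ a, Real.exp (s * f (ins a z)) ∂(ν 0)
          = ∫ a, Real.exp (s * g z) * Real.exp (s * (f (ins a z) - g z)) ∂(ν 0) := by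
            exact integral_congr_ae (ae_of_all _ heq)
        _ = Real.exp (s * g z) * ∫ a, Real.exp (s * (f (ins a z) - g z)) ∂(ν 0) :=
            integral_const_mul _ _
        _ ≤ Real.exp (s * g z) * Real.exp (s ^ 2 * (c - g z + ε 0 - (c - g z)) ^ 2 / 8) := by
            apply mul_le_mul_of_nonneg_left _ (Real.exp_pos _).le
            exact hh
        _ = Real.exp (s * g z) * Real.exp (s ^ 2 * ε 0 ^ 2 / 8) := by ring_nf
    -- transfer to product and apply Fubini
    have hexpF_int : Integrable (fun p : A × (Fin n → A) => Real.exp (s * f (ins p.1 p.2)))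
        ((ν 0).prod (Measure.pi ν')) := by
      apply integrable_of_bdd _ (((hf.comp hins_meas).const_mul s).exp).aestronglyMeasurable
        (Real.exp (|s| * B))
      intro p
      rw [abs_of_pos (Real.exp_pos _)]
      apply Real.exp_le_exp.mpr
      calc s * f (ins p.1 p.2) ≤ |s * f (ins p.1 p.2)| := le_abs_self _
        _ = |s| * |f (ins p.1 p.2)| := abs_mul _ _
        _ ≤ |s| * B := mul_le_mul_of_nonneg_left (hfbd _) (abs_nonneg s)
    have hF_int : Integrable (fun p : A × (Fin n → A) => f (ins p.1 p.2))
        ((ν 0).prod (Measure.pi ν')) :=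
      integrable_of_bdd _ (hf.comp hins_meas).aestronglyMeasurable B (fun p => hfbd _)
    have transfer : ∀ (G : (Fin (n+1) → A) → ℝ),
        ∫ y, G y ∂(Measure.pi ν) = ∫ p, G (ins p.1 p.2) ∂((ν 0).prod (Measure.pi ν')) := by
      intro G
      have := (mp.symm e).integral_comp e.symm.measurableEmbedding G
      rw [← this]
      congr 1
    -- integral of f equals integral of g
    have hint_f_eq : ∫ y, f y ∂(Measure.pi ν) = ∫ z, g z ∂(Measure.pi ν') := by
      rw [transfer f, integral_prod_symm _ hF_int]
      simp only [hg]
    -- main chain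
    have hexpg_int : Integrable (fun z => Real.exp (s * g z)) (Measure.pi ν') := by
      apply integrable_of_bdd _
        ((Real.continuous_exp.comp_stronglyMeasurable (hgsm.const_mul s)).aestronglyMeasurable)
      swap
      · exact Real.exp (|s| * B)
      intro z
      rw [abs_of_pos (Real.exp_pos _)]
      apply Real.exp_le_exp.mpr
      calc s * g z ≤ |s * g z| := le_abs_self _
        _ = |s| * |g z| := abs_mul _ _
        _ ≤ |s| * B := mul_le_mul_of_nonneg_left (hgbd z) (abs_nonneg s)
    have hinner_int : Integrable (fun z => ∫ a, Real.exp (s * f (ins a z)) ∂(ν 0))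
        (Measure.pi ν') := hexpF_int.integral_prod_right
    have hgmeas : Measurable g := hgsm.measurable
    have ihg := ih ν' (fun j => hν _) g hgmeas (fun j => ε j.succ)
      (fun j => hε _) hbd_g s
    calc ∫ y, Real.exp (s * f y) ∂(Measure.pi ν)
        = ∫ p, Real.exp (s * f (ins p.1 p.2)) ∂((ν 0).prod (Measure.pi ν')) :=
          transfer _
      _ = ∫ z, (∫ a, Real.exp (s * f (ins a z)) ∂(ν 0)) ∂(Measure.pi ν') :=
          integral_prod_symm _ hexpF_int
      _ ≤ ∫ z, Real.exp (s ^ 2 * ε 0 ^ 2 / 8) * Real.exp (s * g z) ∂(Measure.pi ν') := by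
          apply integral_mono hinner_int (hexpg_int.const_mul _)
          intro z
          calc (∫ a, Real.exp (s * f (ins a z)) ∂(ν 0))
              ≤ Real.exp (s * g z) * Real.exp (s ^ 2 * ε 0 ^ 2 / 8) := hoeff z
            _ = Real.exp (s ^ 2 * ε 0 ^ 2 / 8) * Real.exp (s * g z) := mul_comm _ _
      _ = Real.exp (s ^ 2 * ε 0 ^ 2 / 8) * ∫ z, Real.exp (s * g z) ∂(Measure.pi ν') := by
          rw [integral_const_mul]
      _ ≤ Real.exp (s ^ 2 * ε 0 ^ 2 / 8) *
          Real.exp (s * (∫ z, g z ∂(Measure.pi ν')) + s ^ 2 * (∑ j : Fin n, ε j.succ ^ 2) / 8) :=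
          by exact mul_le_mul_of_nonneg_left ihg (Real.exp_pos _).le
      _ = Real.exp (s * ∫ y, f y ∂(Measure.pi ν) + s ^ 2 * (∑ k, ε k ^ 2) / 8) := by
          rw [← Real.exp_add, hint_f_eq, Fin.sum_univ_succ (fun k => ε k ^ 2)]
          ring_nf

/-- McDiarmid's bounded differences inequality: if `X 1, ..., X n` are
independent random variables with values in `A` and `f : A^n → ℝ` changes by
at most `ε k` when only the `k`-th coordinate changes, then for every `l > 0`,
`P(|f(X) - E[f(X)]| ≥ l) ≤ 2 exp (-2 l^2 / ∑ k, ε k ^ 2)`. -/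
theorem mcdiarmid_bounded_differences
    {Ω : Type*} [MeasurableSpace Ω] (μ : Measure Ω) [IsProbabilityMeasure μ]
    {A : Type*} [mA : MeasurableSpace A] (n : ℕ)
    (X : Fin n → Ω → A) (hXmeas : ∀ k, Measurable (X k))
    (hXindep : iIndepFun X μ)
    (f : (Fin n → A) → ℝ) (hfmeas : Measurable f)
    (ε : Fin n → ℝ) (hε : ∀ k, 0 < ε k)
    (hbd : ∀ (t t' : Fin n → A) (k : Fin n),
      (∀ j, j ≠ k → t j = t' j) → |f t - f t'| ≤ ε k)
    (l : ℝ) (hl : 0 < l) :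
    μ {ω | l ≤ |f (fun k => X k ω) - ∫ ω', f (fun k => X k ω') ∂μ|}
      ≤ ENNReal.ofReal (2 * Real.exp (-2 * l ^ 2 / ∑ k, ε k ^ 2)) := by
  classical
  rcases Nat.eq_zero_or_pos n with hn | hn
  · -- n = 0 : f is constant
    subst hn
    have hconst : ∀ ω : Ω, f (fun k => X k ω) = f (fun k : Fin 0 => k.elim0) := by
      intro ω; congr 1; funext k; exact k.elim0
    have hempty : {ω | l ≤ |f (fun k => X k ω) - ∫ ω', f (fun k => X k ω') ∂μ|} = ∅ := by
      rw [Set.eq_empty_iff_forall_notMem]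
      intro ω hω
      simp only [Set.mem_setOf_eq] at hω
      rw [hconst ω, show (fun ω' => f (fun k => X k ω')) = fun _ => f (fun k : Fin 0 => k.elim0)
        from funext fun ω' => hconst ω', integral_const] at hω
      simp at hω
      linarith
    rw [hempty]
    simp
  · -- n > 0
    have hFin : Nonempty (Fin n) := ⟨⟨0, hn⟩⟩
    set ν : Fin n → Measure A := fun k => μ.map (X k) with hνdef
    haveI : ∀ k, IsProbabilityMeasure (ν k) := fun k =>
      Measure.isProbabilityMeasure_map (hXmeas k).aemeasurable
    haveI : IsProbabilityMeasure (Measure.pi ν) := by infer_instance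
    set T : Ω → (Fin n → A) := fun ω k => X k ω with hT
    have hTmeas : Measurable T := measurable_pi_lambda _ (fun k => hXmeas k)
    have hmap : μ.map T = Measure.pi ν := by
      symm
      apply Measure.pi_eq
      intro sets hsets
      rw [Measure.map_apply hTmeas (MeasurableSet.univ_pi hsets)]
      have hpre : T ⁻¹' (Set.univ.pi sets) = ⋂ k, X k ⁻¹' sets k := by
        ext ω; simp [hT, Set.mem_pi]
      rw [hpre, hXindep.meas_iInter (fun k => ⟨sets k, hsets k, rfl⟩)]
      exact Finset.prod_congr rfl fun k _ => (Measure.map_apply (hXmeas k) (hsets k)).symm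
    set m : ℝ := ∫ y, f y ∂(Measure.pi ν) with hm
    have hmean : ∫ ω', f (T ω') ∂μ = m := by
      rw [hm, ← hmap, integral_map hTmeas.aemeasurable hfmeas.aestronglyMeasurable]
    -- A nonempty, f bounded
    have hΩ : Nonempty Ω := by
      rcases isEmpty_or_nonempty Ω with hE | hN
      · exfalso
        have h1 : μ Set.univ = 1 := measure_univ
        rw [Set.univ_eq_empty_iff.mpr hE] at h1
        simp at h1
      · exact hN
    have hA : Nonempty A := ⟨X ⟨0, hn⟩ (Classical.arbitrary Ω)⟩
    obtain ⟨a₀⟩ := hA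
    set B : ℝ := |f (fun _ => a₀)| + ∑ k, ε k with hB
    have hfbd : ∀ t, |f t| ≤ B := by
      intro t
      have := bdd_diff_total f ε hbd t (fun _ => a₀)
      calc |f t| = |f t - f (fun _ => a₀) + f (fun _ => a₀)| := by ring_nf
        _ ≤ |f t - f (fun _ => a₀)| + |f (fun _ => a₀)| := abs_add_le _ _
        _ ≤ B := by rw [hB]; linarith
    -- constants
    set S : ℝ := ∑ k, ε k ^ 2 with hS
    have hSpos : 0 < S := Finset.sum_pos (fun k _ => pow_pos (hε k) 2)
      (Finset.univ_nonempty)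
    set t : ℝ := 4 * l / S with htdef
    have ht : 0 ≤ t := by positivity
    have hexp_eq : -t * l + t ^ 2 * S / 8 = -2 * l ^ 2 / S := by
      rw [htdef]; field_simp; ring
    -- integrability helpers
    have hint1 : Integrable (fun y => Real.exp (t * (f y - m))) (Measure.pi ν) := by
      apply integrable_of_bdd _ (((hfmeas.sub_const m).const_mul t).exp).aestronglyMeasurable
        (Real.exp (|t| * (B + |m|)))
      intro y
      rw [abs_of_pos (Real.exp_pos _)]
      apply Real.exp_le_exp.mpr
      calc t * (f y - m) ≤ |t * (f y - m)| := le_abs_self _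
        _ = |t| * |f y - m| := abs_mul _ _
        _ ≤ |t| * (B + |m|) := by
            apply mul_le_mul_of_nonneg_left _ (abs_nonneg t)
            calc |f y - m| ≤ |f y| + |m| := abs_sub _ _
              _ ≤ B + |m| := by linarith [hfbd y]
    have hint2 : Integrable (fun y => Real.exp (t * (m - f y))) (Measure.pi ν) := by
      apply integrable_of_bdd _ ((((measurable_const.sub hfmeas)).const_mul t).exp).aestronglyMeasurable
        (Real.exp (|t| * (B + |m|)))
      intro y
      rw [abs_of_pos (Real.exp_pos _)]
      apply Real.exp_le_exp.mpr
      calc t * (m - f y) ≤ |t * (m - f y)| := le_abs_self _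
        _ = |t| * |m - f y| := abs_mul _ _
        _ ≤ |t| * (B + |m|) := by
            apply mul_le_mul_of_nonneg_left _ (abs_nonneg t)
            calc |m - f y| ≤ |m| + |f y| := abs_sub _ _
              _ ≤ B + |m| := by linarith [hfbd y]
    -- mgf bounds
    have mgf1 := mcdiarmid_mgf n ν (fun k => inferInstance) f hfmeas ε (fun k => (hε k).le) hbd t
    have mgf2 := mcdiarmid_mgf n ν (fun k => inferInstance) (fun y => - f y)
      ((hfmeas.neg)) ε (fun k => (hε k).le)
      (fun t t' k h => by
        have := hbd t t' k h
        calc |(fun y => -f y) t - (fun y => -f y) t'| = |f t - f t'| := by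
              simp only; rw [← abs_neg]; ring_nf
          _ ≤ ε k := this) t
    rw [integral_neg] at mgf2
    -- Chernoff, upper tail
    have cher1 : ((Measure.pi ν) {y | l ≤ f y - m}).toReal ≤ Real.exp (-2 * l ^ 2 / S) := by
      have := measure_ge_le_exp_mul_mgf (X := fun y => f y - m) (μ := Measure.pi ν)
        (t := t) l ht hint1
      apply le_trans this
      rw [mgf]
      have heq : ∀ y, Real.exp (t * (f y - m)) = Real.exp (-(t * m)) * Real.exp (t * f y) := by
        intro y; rw [← Real.exp_add]; ring_nf
      calc Real.exp (-t * l) * ∫ y, Real.exp (t * (f y - m)) ∂(Measure.pi ν)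
          = Real.exp (-t * l) * (Real.exp (-(t * m)) * ∫ y, Real.exp (t * f y) ∂(Measure.pi ν)) := by
            rw [show (fun y => Real.exp (t * (f y - m))) = fun y => Real.exp (-(t*m)) * Real.exp (t * f y)
              from funext heq, integral_const_mul]
        _ ≤ Real.exp (-t * l) * (Real.exp (-(t * m)) * Real.exp (t * m + t ^ 2 * S / 8)) := by
            apply mul_le_mul_of_nonneg_left _ (Real.exp_pos _).le
            exact mul_le_mul_of_nonneg_left mgf1 (Real.exp_pos _).le
        _ = Real.exp (-t * l + t ^ 2 * S / 8) := by
            rw [← Real.exp_add, ← Real.exp_add]; ring_nf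
        _ = Real.exp (-2 * l ^ 2 / S) := by rw [hexp_eq]
    have cher2 : ((Measure.pi ν) {y | l ≤ m - f y}).toReal ≤ Real.exp (-2 * l ^ 2 / S) := by
      have := measure_ge_le_exp_mul_mgf (X := fun y => m - f y) (μ := Measure.pi ν)
        (t := t) l ht hint2
      apply le_trans this
      rw [mgf]
      have heq : ∀ y, Real.exp (t * (m - f y)) = Real.exp (t * m) * Real.exp (t * (- f y)) := by
        intro y; rw [← Real.exp_add]; ring_nf
      calc Real.exp (-t * l) * ∫ y, Real.exp (t * (m - f y)) ∂(Measure.pi ν)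
          = Real.exp (-t * l) * (Real.exp (t * m) * ∫ y, Real.exp (t * (- f y)) ∂(Measure.pi ν)) := by
            rw [show (fun y => Real.exp (t * (m - f y))) = fun y => Real.exp (t*m) * Real.exp (t * (- f y))
              from funext heq, integral_const_mul]
        _ ≤ Real.exp (-t * l) * (Real.exp (t * m) * Real.exp (t * (-m) + t ^ 2 * S / 8)) := by
            apply mul_le_mul_of_nonneg_left _ (Real.exp_pos _).le
            exact mul_le_mul_of_nonneg_left mgf2 (Real.exp_pos _).le
        _ = Real.exp (-t * l + t ^ 2 * S / 8) := by
            rw [← Real.exp_add, ← Real.exp_add]; ring_nf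
        _ = Real.exp (-2 * l ^ 2 / S) := by rw [hexp_eq]
    -- measurable sets
    have hms1 : MeasurableSet {y : Fin n → A | l ≤ f y - m} :=
      measurableSet_le measurable_const (hfmeas.sub_const m)
    have hms2 : MeasurableSet {y : Fin n → A | l ≤ m - f y} :=
      measurableSet_le measurable_const (measurable_const.sub hfmeas)
    have hmsabs : MeasurableSet {y : Fin n → A | l ≤ |f y - m|} :=
      measurableSet_le measurable_const (hfmeas.sub_const m).abs
    -- from toReal to ENNReal
    have hup1 : (Measure.pi ν) {y | l ≤ f y - m} ≤ ENNReal.ofReal (Real.exp (-2 * l ^ 2 / S)) :=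
      (ENNReal.le_ofReal_iff_toReal_le (measure_ne_top _ _) (Real.exp_pos _).le).mpr cher1
    have hup2 : (Measure.pi ν) {y | l ≤ m - f y} ≤ ENNReal.ofReal (Real.exp (-2 * l ^ 2 / S)) :=
      (ENNReal.le_ofReal_iff_toReal_le (measure_ne_top _ _) (Real.exp_pos _).le).mpr cher2
    -- union bound
    have hsub : {y : Fin n → A | l ≤ |f y - m|}
        ⊆ {y : Fin n → A | l ≤ f y - m} ∪ {y : Fin n → A | l ≤ m - f y} := by
      intro y hy
      simp only [Set.mem_setOf_eq] at hy
      rcases le_abs.mp hy with h | h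
      · exact Or.inl h
      · exact Or.inr (by simpa [Set.mem_setOf_eq] using by linarith : l ≤ m - f y)
    have hpibound : (Measure.pi ν) {y | l ≤ |f y - m|}
        ≤ ENNReal.ofReal (2 * Real.exp (-2 * l ^ 2 / S)) := by
      calc (Measure.pi ν) {y | l ≤ |f y - m|}
          ≤ (Measure.pi ν) ({y | l ≤ f y - m} ∪ {y | l ≤ m - f y}) := measure_mono hsub
        _ ≤ (Measure.pi ν) {y | l ≤ f y - m} + (Measure.pi ν) {y | l ≤ m - f y} :=
            measure_union_le _ _
        _ ≤ ENNReal.ofReal (Real.exp (-2 * l ^ 2 / S)) + ENNReal.ofReal (Real.exp (-2 * l ^ 2 / S)) :=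
            add_le_add hup1 hup2
        _ = ENNReal.ofReal (2 * Real.exp (-2 * l ^ 2 / S)) := by
            rw [← ENNReal.ofReal_add (Real.exp_pos _).le (Real.exp_pos _).le]
            ring_nf
    -- transfer to Ω
    have hfinal : μ {ω | l ≤ |f (T ω) - m|} = (Measure.pi ν) {y | l ≤ |f y - m|} := by
      rw [← hmap, Measure.map_apply hTmeas hmsabs]
      rfl
    calc μ {ω | l ≤ |f (fun k => X k ω) - ∫ ω', f (fun k => X k ω') ∂μ|}
        = μ {ω | l ≤ |f (T ω) - m|} := by rw [hmean]
      _ = (Measure.pi ν) {y | l ≤ |f y - m|} := hfinal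
      _ ≤ ENNReal.ofReal (2 * Real.exp (-2 * l ^ 2 / S)) := hpibound
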